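/- Let W be a contraction on a Hilbert space H with Ker W = {0}. If W has a unitary quasi-affine transform (a unitary U' on some Hilbert space H' and a quasi-affinity Λ : H' → H with WΛ = ΛU'), then W is of class C_{·1}: for every nonzero h ∈ H, W*ⁿ h does not converge to 0. -/

import Mathlib

open scoped InnerProductSpace
open Filter

/-- If a contraction `W` with trivial kernel has a unitary quasi-affine
transform, then `W` is of class `C_{·1}`: `W*ⁿ h ↛ 0` for every nonzero `h`. -/
theorem unitary_quasi_affine_transform_implies_C1
    {H H' : Type*}
    [NormedAddCommGroup H] [InnerProductSpace ℂ H] [CompleteSpace H]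
    [NormedAddCommGroup H'] [InnerProductSpace ℂ H'] [CompleteSpace H']
    (W : H →L[ℂ] H) (hW : ‖W‖ ≤ 1) (hker : LinearMap.ker (W : H →ₗ[ℂ] H) = ⊥)
    (U' : H' ≃ₗᵢ[ℂ] H')
    (Λ : H' →L[ℂ] H)
    (hΛinj : Function.Injective Λ) (hΛdense : Dense (Set.range Λ))
    (hint : ∀ x, W (Λ x) = Λ (U' x)) :
    ∀ h : H, h ≠ 0 →
      ¬ Tendsto (fun n : ℕ => ((ContinuousLinearMap.adjoint W) ^ n) h) atTop (nhds 0) := by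
  intro h hne htend
  apply hne
  -- For each x, ⟪h, Λ x⟫ = 0
  have key : ∀ x : H', ⟪h, Λ x⟫_ℂ = 0 := by
    intro x
    set y : ℕ → H' := fun n => (U'.symm)^[n] x with hy
    have hyx : ∀ n, (W ^ n) (Λ (y n)) = Λ x := by
      intro n
      induction n with
      | zero => simp [hy]
      | succ n ih =>
        have hy' : y (n + 1) = U'.symm (y n) := by
          simp [hy, Function.iterate_succ_apply']
        rw [hy', pow_succ]
        simp only [ContinuousLinearMap.mul_apply]
        rw [hint (U'.symm (y n))]
        simp [ih]
    have hynorm : ∀ n, ‖y n‖ = ‖x‖ := by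
      intro n
      induction n with
      | zero => simp [hy]
      | succ n ih =>
        have hy' : y (n + 1) = U'.symm (y n) := by
          simp [hy, Function.iterate_succ_apply']
        rw [hy', LinearIsometryEquiv.norm_map, ih]
    have hadj : ∀ n : ℕ, (ContinuousLinearMap.adjoint W) ^ n
        = ContinuousLinearMap.adjoint (W ^ n) := by
      intro n
      rw [← ContinuousLinearMap.star_eq_adjoint, ← ContinuousLinearMap.star_eq_adjoint,
        ← star_pow]
    have hbound : ∀ n : ℕ,
        ‖⟪h, Λ x⟫_ℂ‖ ≤ ‖((ContinuousLinearMap.adjoint W) ^ n) h‖ * (‖Λ‖ * ‖x‖) := by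
      intro n
      have : ⟪h, Λ x⟫_ℂ = ⟪((ContinuousLinearMap.adjoint W) ^ n) h, Λ (y n)⟫_ℂ := by
        rw [hadj n, ContinuousLinearMap.adjoint_inner_left, hyx n]
      rw [this]
      calc ‖⟪((ContinuousLinearMap.adjoint W) ^ n) h, Λ (y n)⟫_ℂ‖
          ≤ ‖((ContinuousLinearMap.adjoint W) ^ n) h‖ * ‖Λ (y n)‖ :=
            norm_inner_le_norm _ _
        _ ≤ ‖((ContinuousLinearMap.adjoint W) ^ n) h‖ * (‖Λ‖ * ‖x‖) := by
            apply mul_le_mul_of_nonneg_left _ (norm_nonneg _)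
            calc ‖Λ (y n)‖ ≤ ‖Λ‖ * ‖y n‖ := Λ.le_opNorm _
              _ = ‖Λ‖ * ‖x‖ := by rw [hynorm n]
    have hlim : Tendsto (fun n : ℕ =>
        ‖((ContinuousLinearMap.adjoint W) ^ n) h‖ * (‖Λ‖ * ‖x‖)) atTop (nhds 0) := by
      have := (htend.norm).mul_const (‖Λ‖ * ‖x‖)
      simpa using this
    have hle : ‖⟪h, Λ x⟫_ℂ‖ ≤ 0 :=
      ge_of_tendsto hlim (Filter.Eventually.of_forall hbound)
    have : ‖⟪h, Λ x⟫_ℂ‖ = 0 := le_antisymm hle (norm_nonneg _)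
    exact norm_eq_zero.mp this
  -- h is orthogonal to a dense set, hence h = 0
  have hcont : Continuous (fun z : H => ⟪h, z⟫_ℂ) := continuous_const.inner continuous_id
  have heq : (fun z : H => ⟪h, z⟫_ℂ) = fun _ => (0 : ℂ) := by
    apply Continuous.ext_on hΛdense hcont continuous_const
    rintro _ ⟨x, rfl⟩
    exact key x
  have : ⟪h, h⟫_ℂ = 0 := congrFun heq h
  exact inner_self_eq_zero.mp this
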